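/- Let Γ ∈ 𝓕_i(a_1,…,a_q; b_1,…,b_q), suppose i + 1 is not a sink of Γ and no edge of Γ begins at i. Let M_2(Γ) be the graph obtained from Γ by adding the edge (i, i + 1). Then M_2(Γ) ∈ 𝓕_i(a_1,…,a_q, i; b_1,…,b_q, i + 1) and sgn_i(M_2(Γ)) = −sgn_i(Γ). -/

import Mathlib

open Finset

/-- A "flow graph" is a finite set of directed edges with integer vertices. -/
abbrev FlowGraph : Type := Finset (ℤ × ℤ)

/-- The edges of `E` beginning at `r`. -/
def beginsAt (E : FlowGraph) (r : ℤ) : Finset (ℤ × ℤ) := E.filter (fun e => e.1 = r)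

/-- The edges of `E` ending at `r`. -/
def endsAt (E : FlowGraph) (r : ℤ) : Finset (ℤ × ℤ) := E.filter (fun e => e.2 = r)

/-- `E` is a flow with set of sources `A` and set of sinks `B`:
every edge `(s,t)` has `s < t`; the sources and sinks are pairwise distinct;
exactly one edge begins at each source (and none ends there); exactly one edge
ends at each sink (and none begins there); and every other vertex either meets
no edge, or exactly one edge ends at it and exactly one edge begins at it
(such a vertex is a transit point). -/
structure IsFlow (E : FlowGraph) (A B : Finset ℤ) : Prop where
  edge_lt : ∀ e ∈ E, e.1 < e.2
  disjAB : Disjoint A B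
  source_out : ∀ a ∈ A, (beginsAt E a).card = 1
  source_in : ∀ a ∈ A, endsAt E a = ∅
  sink_in : ∀ b ∈ B, (endsAt E b).card = 1
  sink_out : ∀ b ∈ B, beginsAt E b = ∅
  transit : ∀ r : ℤ, r ∉ A → r ∉ B →
      (beginsAt E r = ∅ ∧ endsAt E r = ∅) ∨
      ((beginsAt E r).card = 1 ∧ (endsAt E r).card = 1)

/-- The set of transit points of the flow `E` with sources `A` and sinks `B`:
the vertices meeting some edge which are neither sources nor sinks. -/
def transitSet (E : FlowGraph) (A B : Finset ℤ) : Finset ℤ :=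
  ((E.image Prod.fst) ∪ (E.image Prod.snd)) \ (A ∪ B)

def IsTransitPoint (E : FlowGraph) (A B : Finset ℤ) (r : ℤ) : Prop :=
  r ∈ transitSet E A B

/-- Two vertices are linked if they lie in the same connected component of `E`. -/
def Linked (E : FlowGraph) (x y : ℤ) : Prop :=
  Relation.ReflTransGen (fun u v => (u, v) ∈ E ∨ (v, u) ∈ E) x y

/-- The finset of values of a family of integers. -/
def srcSet {q : ℕ} (a : Fin q → ℤ) : Finset ℤ := Finset.image a Finset.univ

/-- Membership in `𝓕_i(a_1,…,a_q; b_1,…,b_q)` : a flow with sources the `a j`,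
sinks the `b j`, and no transit point greater than `i`. -/
def InF {q : ℕ} (i : ℤ) (a b : Fin q → ℤ) (E : FlowGraph) : Prop :=
  IsFlow E (srcSet a) (srcSet b) ∧
  ∀ r : ℤ, IsTransitPoint E (srcSet a) (srcSet b) r → r ≤ i

/-- `σ` is the linking permutation: the source `a j` is linked to the sink `b (σ j)`. -/
def IsLinkingPerm {q : ℕ} (E : FlowGraph) (a b : Fin q → ℤ) (σ : Equiv.Perm (Fin q)) : Prop :=
  ∀ j : Fin q, Linked E (a j) (b (σ j))

/-- The `i`-sign of a flow `E` (with sources `A`, sinks given by the family `b` and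
sinks-set `B`), computed from a linking permutation `σ`:
`sgn σ * (-1) ^ (Σ_j (b_j - i) + #transit points)`. -/
def signValue {q : ℕ} (i : ℤ) (b : Fin q → ℤ) (σ : Equiv.Perm (Fin q))
    (E : FlowGraph) (A B : Finset ℤ) : ℤ :=
  (Equiv.Perm.sign σ : ℤ) *
    (-1) ^ ((∑ j : Fin q, (b j - i)).toNat + (transitSet E A B).card)

/-! ### Auxiliary lemmas -/

lemma srcSet_snoc {q : ℕ} (a : Fin q → ℤ) (x : ℤ) :
    srcSet (Fin.snoc a x) = insert x (srcSet a) := by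
  ext y
  simp only [srcSet, mem_image, mem_univ, true_and, mem_insert]
  constructor
  · rintro ⟨j, rfl⟩
    rcases Fin.eq_castSucc_or_eq_last j with ⟨k, rfl⟩ | rfl
    · exact Or.inr ⟨k, by simp⟩
    · exact Or.inl (by simp)
  · rintro (rfl | ⟨k, rfl⟩)
    · exact ⟨Fin.last q, by simp⟩
    · exact ⟨k.castSucc, by simp⟩

/-- Out-degree uniqueness in a flow. -/
lemma IsFlow.out_unique {E : FlowGraph} {A B : Finset ℤ} (hF : IsFlow E A B)
    {w c x : ℤ} (h1 : (w, c) ∈ E) (h2 : (w, x) ∈ E) : c = x := by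
  have hc : (w, c) ∈ beginsAt E w := Finset.mem_filter.2 ⟨h1, rfl⟩
  have hx : (w, x) ∈ beginsAt E w := Finset.mem_filter.2 ⟨h2, rfl⟩
  have hcard : (beginsAt E w).card ≤ 1 := by
    by_cases hA : w ∈ A
    · exact le_of_eq (hF.source_out w hA)
    by_cases hB : w ∈ B
    · simp [hF.sink_out w hB]
    rcases hF.transit w hA hB with ⟨h, _⟩ | ⟨h, _⟩
    · simp [h]
    · exact le_of_eq h
  have := Finset.card_le_one.mp hcard _ hc _ hx
  exact congrArg Prod.snd this

/-- Directed reachability in a flow graph. -/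
def Reach (E : FlowGraph) : ℤ → ℤ → Prop := Relation.ReflTransGen (fun u v => (u, v) ∈ E)

lemma linked_symm {E : FlowGraph} {x y : ℤ} (h : Linked E x y) : Linked E y x := by
  refine @Std.Symm.symm _ _ (@Relation.ReflTransGen.stdSymm _ _ ⟨?_⟩) _ _ h
  intro u v huv
  exact huv.symm

/-- Any two linked vertices of a flow have a common descendant. -/
lemma linked_common_desc {E : FlowGraph} {A B : Finset ℤ} (hF : IsFlow E A B)
    {x y : ℤ} (h : Linked E x y) : ∃ z, Reach E x z ∧ Reach E y z := by
  induction h using Relation.ReflTransGen.head_induction_on with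
  | refl => exact ⟨y, Relation.ReflTransGen.refl, Relation.ReflTransGen.refl⟩
  | head hrel _ ih =>
    obtain ⟨z, hwz, hyz⟩ := ih
    rcases hrel with hxw | hwx
    · exact ⟨z, Relation.ReflTransGen.head hxw hwz, hyz⟩
    · rcases Relation.ReflTransGen.cases_head hwz with rfl | ⟨c, hwc, hcz⟩
      · exact ⟨_, Relation.ReflTransGen.refl, hyz.tail hwx⟩
      · cases hF.out_unique hwc hwx
        exact ⟨z, hcz, hyz⟩

lemma sink_reach_eq {E : FlowGraph} {A B : Finset ℤ} (hF : IsFlow E A B)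
    {t z : ℤ} (ht : t ∈ B) (h : Reach E t z) : z = t := by
  rcases Relation.ReflTransGen.cases_head h with rfl | ⟨c, hc, _⟩
  · rfl
  · exfalso
    have : (t, c) ∈ beginsAt E t := Finset.mem_filter.2 ⟨hc, rfl⟩
    rw [hF.sink_out t ht] at this
    simp at this

/-- Two linked sinks are equal. -/
lemma linked_sinks_eq {E : FlowGraph} {A B : Finset ℤ} (hF : IsFlow E A B)
    {t1 t2 : ℤ} (h1 : t1 ∈ B) (h2 : t2 ∈ B) (h : Linked E t1 t2) : t1 = t2 := by
  obtain ⟨z, hz1, hz2⟩ := linked_common_desc hF h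
  rw [← sink_reach_eq hF h1 hz1, ← sink_reach_eq hF h2 hz2]

/-- A vertex linked to a distinct vertex meets some edge. -/
lemma linked_vertex {E : FlowGraph} {x y : ℤ} (h : Linked E x y) (hne : x ≠ y) :
    ∃ e ∈ E, e.1 = y ∨ e.2 = y := by
  rcases Relation.ReflTransGen.cases_tail h with rfl | ⟨c, _, hc⟩
  · exact absurd rfl hne
  · rcases hc with h1 | h2
    · exact ⟨(c, y), h1, Or.inr rfl⟩
    · exact ⟨(y, c), h2, Or.inl rfl⟩

lemma linked_insert_out {E : FlowGraph} {i : ℤ}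
    (hv : ∀ e ∈ E, e.1 ≠ i ∧ e.2 ≠ i ∧ e.1 ≠ i + 1 ∧ e.2 ≠ i + 1)
    {x y : ℤ} (h : Linked (insert (i, i + 1) E) x y) :
    x ≠ i → x ≠ i + 1 → Linked E x y := by
  induction h using Relation.ReflTransGen.head_induction_on with
  | refl => exact fun _ _ => Relation.ReflTransGen.refl
  | @head u w hrel _ ih =>
    intro hu1 hu2
    rcases hrel with huw | hwu
    · rcases Finset.mem_insert.mp huw with heq | hmem
      · exact absurd (congrArg Prod.fst heq) hu1
      · have hw := hv _ hmem
        exact Relation.ReflTransGen.head (Or.inl hmem) (ih hw.2.1 hw.2.2.2)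
    · rcases Finset.mem_insert.mp hwu with heq | hmem
      · exact absurd (congrArg Prod.snd heq) hu2
      · have hw := hv _ hmem
        exact Relation.ReflTransGen.head (Or.inr hmem) (ih hw.1 hw.2.2.1)

/-- Lemma 16: let `Γ ∈ 𝓕_i(a_1,…,a_q; b_1,…,b_q)` with `i + 1` not a sink of `Γ`
and no edge of `Γ` beginning at `i`. Then `M_2(Γ)` (adding the edge `(i, i + 1)`)
belongs to `𝓕_i(a_1,…,a_q, i; b_1,…,b_q, i + 1)` and has `i`-sign opposite to
that of `Γ`. -/
theorem statement6 {q : ℕ} (i : ℤ) (a b : Fin q → ℤ)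
    (ha : StrictMono a) (hb : StrictAnti b)
    (hai : ∀ j, a j ≤ i) (hbi : ∀ j, i < b j)
    (E : FlowGraph) (hE : InF i a b E)
    (hsink : ∀ j, b j ≠ i + 1)
    (hno : ∀ e ∈ E, e.1 ≠ i) :
    InF i (Fin.snoc a i) (Fin.snoc b (i + 1)) (insert (i, i + 1) E) ∧
    ∀ (σ : Equiv.Perm (Fin q)) (τ : Equiv.Perm (Fin (q + 1))),
      IsLinkingPerm E a b σ →
      IsLinkingPerm (insert (i, i + 1) E) (Fin.snoc a i) (Fin.snoc b (i + 1)) τ →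
      signValue i (Fin.snoc b (i + 1)) τ (insert (i, i + 1) E)
          (srcSet (Fin.snoc a i)) (srcSet (Fin.snoc b (i + 1)))
        = - signValue i b σ E (srcSet a) (srcSet b) := by
  classical
  obtain ⟨hF, htr⟩ := hE
  set A := srcSet a with hA
  set B := srcSet b with hB
  set E' : FlowGraph := insert (i, i + 1) E with hE'
  -- basic facts
  have begins_i : beginsAt E i = ∅ := by
    rw [beginsAt, Finset.filter_eq_empty_iff]; exact hno
  have hiA : i ∉ A := by
    intro h
    have := hF.source_out i h
    rw [begins_i] at this; simp at this
  have hiB : i ∉ B := by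
    simp only [hB, srcSet, mem_image, mem_univ, true_and]
    rintro ⟨j, hj⟩; exact absurd hj (hbi j).ne'
  have hi1A : (i + 1) ∉ A := by
    simp only [hA, srcSet, mem_image, mem_univ, true_and]
    rintro ⟨j, hj⟩; have := hai j; omega
  have hi1B : (i + 1) ∉ B := by
    simp only [hB, srcSet, mem_image, mem_univ, true_and]
    rintro ⟨j, hj⟩; exact hsink j hj
  have ends_i : endsAt E i = ∅ := by
    rcases hF.transit i hiA hiB with ⟨_, h⟩ | ⟨h, _⟩
    · exact h
    · rw [begins_i] at h; simp at h
  have key_i1 : beginsAt E (i + 1) = ∅ ∧ endsAt E (i + 1) = ∅ := by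
    rcases hF.transit (i + 1) hi1A hi1B with h | ⟨_, he1⟩
    · exact h
    · exfalso
      obtain ⟨e, he⟩ := Finset.card_pos.mp (by rw [he1]; norm_num)
      obtain ⟨heE, he2⟩ := Finset.mem_filter.mp he
      have hmem : IsTransitPoint E A B (i + 1) := by
        rw [IsTransitPoint, transitSet, Finset.mem_sdiff]
        constructor
        · exact Finset.mem_union_right _ (Finset.mem_image.2 ⟨e, heE, he2⟩)
        · rw [Finset.mem_union]; tauto
      have := htr _ hmem; omega
  have hv : ∀ e ∈ E, e.1 ≠ i ∧ e.2 ≠ i ∧ e.1 ≠ i + 1 ∧ e.2 ≠ i + 1 := by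
    intro e he
    refine ⟨hno e he, ?_, ?_, ?_⟩
    · intro h2
      have : e ∈ endsAt E i := Finset.mem_filter.2 ⟨he, h2⟩
      rw [ends_i] at this; simp at this
    · intro h1
      have : e ∈ beginsAt E (i + 1) := Finset.mem_filter.2 ⟨he, h1⟩
      rw [key_i1.1] at this; simp at this
    · intro h2
      have : e ∈ endsAt E (i + 1) := Finset.mem_filter.2 ⟨he, h2⟩
      rw [key_i1.2] at this; simp at this
  -- beginsAt/endsAt of the extended graph
  have hbegins : ∀ r : ℤ, r ≠ i → beginsAt E' r = beginsAt E r := by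
    intro r hr
    rw [hE', beginsAt, Finset.filter_insert, if_neg (by simpa using fun h => hr h.symm)]
    rfl
  have hends : ∀ r : ℤ, r ≠ i + 1 → endsAt E' r = endsAt E r := by
    intro r hr
    rw [hE', endsAt, Finset.filter_insert, if_neg (by simpa using fun h => hr h.symm)]
    rfl
  have hbegins_i : beginsAt E' i = {(i, i + 1)} := by
    rw [hE', beginsAt, Finset.filter_insert, if_pos rfl]
    rw [show Finset.filter (fun e => e.1 = i) E = beginsAt E i from rfl, begins_i]
    rfl
  have hends_i1 : endsAt E' (i + 1) = {(i, i + 1)} := by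
    rw [hE', endsAt, Finset.filter_insert, if_pos rfl]
    rw [show Finset.filter (fun e => e.2 = i + 1) E = endsAt E (i + 1) from rfl, key_i1.2]
    rfl
  have hAB' : srcSet (Fin.snoc a i) = insert i A ∧
      srcSet (Fin.snoc b (i + 1)) = insert (i + 1) B := ⟨srcSet_snoc a i, srcSet_snoc b (i + 1)⟩
  -- vertex non-membership facts for images
  have h1 : i ∉ E.image Prod.fst := by
    simp only [mem_image]; rintro ⟨e, he, h⟩; exact (hv e he).1 h
  have h2 : i ∉ E.image Prod.snd := by
    simp only [mem_image]; rintro ⟨e, he, h⟩; exact (hv e he).2.1 h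
  have h3 : (i + 1) ∉ E.image Prod.fst := by
    simp only [mem_image]; rintro ⟨e, he, h⟩; exact (hv e he).2.2.1 h
  have h4 : (i + 1) ∉ E.image Prod.snd := by
    simp only [mem_image]; rintro ⟨e, he, h⟩; exact (hv e he).2.2.2 h
  have hts : transitSet E' (insert i A) (insert (i + 1) B) = transitSet E A B := by
    ext r
    by_cases hri : r = i
    · subst hri
      simp [transitSet, Finset.image_insert, h1, h2]
    by_cases hri1 : r = i + 1
    · subst hri1
      simp [transitSet, Finset.image_insert, h3, h4, hri]
    · simp [transitSet, hE', Finset.image_insert, Finset.mem_insert, Prod.ext_iff, hri, hri1]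
  -- the new flow
  have hFlow' : IsFlow E' (insert i A) (insert (i + 1) B) := by
    constructor
    · intro e he
      rcases Finset.mem_insert.mp he with rfl | he
      · simp
      · exact hF.edge_lt e he
    · rw [Finset.disjoint_left]
      intro x hx hx'
      rcases Finset.mem_insert.mp hx with rfl | hx <;>
        rcases Finset.mem_insert.mp hx' with h | h
      · omega
      · exact hiB h
      · exact hi1A (h ▸ hx)
      · exact Finset.disjoint_left.mp hF.disjAB hx h
    · intro s hs
      rcases Finset.mem_insert.mp hs with rfl | hs
      · rw [hbegins_i]; rfl
      · rw [hbegins s (fun h => hiA (h ▸ hs))]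
        exact hF.source_out s hs
    · intro s hs
      rcases Finset.mem_insert.mp hs with h | hs
      · subst h
        rw [hends _ (by omega : s ≠ s + 1)]; exact ends_i
      · rw [hends s (fun h => hi1A (h ▸ hs))]
        exact hF.source_in s hs
    · intro t ht
      rcases Finset.mem_insert.mp ht with rfl | ht
      · rw [hends_i1]; rfl
      · rw [hends t (fun h => hi1B (h ▸ ht))]
        exact hF.sink_in t ht
    · intro t ht
      rcases Finset.mem_insert.mp ht with rfl | ht
      · rw [hbegins (i + 1) (by omega)]; exact key_i1.1
      · rw [hbegins t (fun h => hiB (h ▸ ht))]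
        exact hF.sink_out t ht
    · intro r hrA hrB
      have hri : r ≠ i := fun h => hrA (h ▸ Finset.mem_insert_self i A)
      have hri1 : r ≠ i + 1 := fun h => hrB (h ▸ Finset.mem_insert_self (i + 1) B)
      rw [hbegins r hri, hends r hri1]
      exact hF.transit r (fun h => hrA (Finset.mem_insert_of_mem h))
        (fun h => hrB (Finset.mem_insert_of_mem h))
  constructor
  · constructor
    · rw [hAB'.1, hAB'.2]; exact hFlow'
    · intro r hr
      rw [IsTransitPoint, hAB'.1, hAB'.2, hts] at hr
      exact htr r hr
  · intro σ τ hσ hτ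
    -- a j is not i or i+1
    have haji : ∀ j : Fin q, a j ≠ i := by
      intro j h
      exact hiA (h ▸ Finset.mem_image.2 ⟨j, Finset.mem_univ j, rfl⟩)
    have haji1 : ∀ j : Fin q, a j ≠ i + 1 := by
      intro j h
      have := hai j
      omega
    -- step: behaviour of τ on castSucc
    have hstep : ∀ j : Fin q, τ (Fin.castSucc j) = Fin.castSucc (σ j) := by
      intro j
      have hl := hτ (Fin.castSucc j)
      rw [Fin.snoc_castSucc] at hl
      rcases Fin.eq_castSucc_or_eq_last (τ (Fin.castSucc j)) with ⟨k, hk⟩ | hlast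
      · rw [hk, Fin.snoc_castSucc] at hl
        have hlE : Linked E (a j) (b k) :=
          linked_insert_out hv hl (haji j) (haji1 j)
        have hlσ : Linked E (a j) (b (σ j)) := hσ j
        have hbb : Linked E (b (σ j)) (b k) := (linked_symm hlσ).trans hlE
        have hmem1 : b (σ j) ∈ B := Finset.mem_image.2 ⟨σ j, Finset.mem_univ _, rfl⟩
        have hmem2 : b k ∈ B := Finset.mem_image.2 ⟨k, Finset.mem_univ _, rfl⟩
        have : σ j = k := hb.injective (linked_sinks_eq hF hmem1 hmem2 hbb)
        rw [hk, this]
      · exfalso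
        rw [hlast, Fin.snoc_last] at hl
        have hlE : Linked E (a j) (i + 1) :=
          linked_insert_out hv hl (haji j) (haji1 j)
        obtain ⟨e, he, hor⟩ := linked_vertex hlE (haji1 j)
        rcases hor with h | h
        · exact (hv e he).2.2.1 h
        · exact (hv e he).2.2.2 h
    have hlastτ : τ (Fin.last q) = Fin.last q := by
      rcases Fin.eq_castSucc_or_eq_last (τ (Fin.last q)) with ⟨k, hk⟩ | h
      · exfalso
        have h1 : τ (Fin.castSucc (σ.symm k)) = Fin.castSucc k := by
          rw [hstep, Equiv.apply_symm_apply]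
        have := τ.injective (h1.trans hk.symm)
        exact absurd this (Fin.castSucc_lt_last _).ne
      · exact h
    -- τ is the extension of σ
    let f : Fin q ≃ {x : Fin (q + 1) // x ≠ Fin.last q} :=
      { toFun := fun j => ⟨j.castSucc, (Fin.castSucc_lt_last j).ne⟩
        invFun := fun x => x.1.castPred x.2
        left_inv := fun j => by simp
        right_inv := fun x => by simp }
    have hτeq : τ = σ.extendDomain f := by
      ext x
      rcases Fin.eq_castSucc_or_eq_last x with ⟨j, rfl⟩ | rfl
      · rw [hstep, Equiv.Perm.extendDomain_apply_subtype σ f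
          (show (Fin.castSucc j : Fin (q + 1)) ≠ Fin.last q from (Fin.castSucc_lt_last j).ne)]
        simp [f]
        rfl
      · rw [hlastτ, Equiv.Perm.extendDomain_apply_not_subtype σ f (by simp)]
    have hsign : Equiv.Perm.sign τ = Equiv.Perm.sign σ := by
      rw [hτeq, Equiv.Perm.sign_extendDomain]
    -- arithmetic
    have hsum : (∑ j : Fin (q + 1), ((Fin.snoc b (i + 1) : Fin (q + 1) → ℤ) j - i))
        = (∑ j : Fin q, (b j - i)) + 1 := by
      rw [Fin.sum_univ_castSucc]
      simp [Fin.snoc_castSucc, Fin.snoc_last]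
    have hpos : 0 ≤ ∑ j : Fin q, (b j - i) :=
      Finset.sum_nonneg fun j _ => by have := hbi j; omega
    rw [signValue, signValue, hAB'.1, hAB'.2, hts, hsum,
      Int.toNat_add hpos (by norm_num), hsign]
    rw [show (∑ j : Fin q, (b j - i)).toNat + (1 : ℤ).toNat + (transitSet E A B).card
      = ((∑ j : Fin q, (b j - i)).toNat + (transitSet E A B).card) + 1 by
        simp [Int.toNat_one]; ring]
    rw [pow_succ]
    ring
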